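/- arXiv:2603.19215 — 2 statements merged into one kernel-verified Lean document; each statement's English description precedes it below -/
import Mathlib

section
/- Over the field 𝔽₂ with two elements, let F̃ = T₀²T₁ + T₀T₁² + T₂³ + T₂²T₃ + T₃³ + T₁(T₁² + T₂T₃ + T₂² + T₃²) ∈ 𝔽₂[T₀,T₁,T₂,T₃]. Then: (a) the surface F̃ = 0 is smooth, i.e., over an algebraic closure of 𝔽₂ there is no nonzero common zero of F̃ and its four partial derivatives; and (b) the only nonzero zero of F̃ in 𝔽₂⁴ is (1,0,0,0), so the surface has exactly one 𝔽₂-rational point. -/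
open MvPolynomial

/-- The surface `F = 0` is smooth: `F` together with its four partial derivatives
has no common nonzero zero over an algebraic closure of `k`. -/
def IsSmoothCubicSurface {k : Type*} [Field k] (F : MvPolynomial (Fin 4) k) : Prop :=
  ∀ x : Fin 4 → AlgebraicClosure k, x ≠ 0 →
    ¬ (MvPolynomial.eval x (MvPolynomial.map (algebraMap k (AlgebraicClosure k)) F) = 0 ∧
      ∀ i : Fin 4, MvPolynomial.eval x
        (MvPolynomial.map (algebraMap k (AlgebraicClosure k)) (MvPolynomial.pderiv i F)) = 0)

private lemma smooth_aux (x : Fin 4 → AlgebraicClosure (ZMod 2))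
    (h : ∀ i : Fin 4, eval x (map (algebraMap (ZMod 2) (AlgebraicClosure (ZMod 2)))
      (pderiv i ((X 0 ^ 2 * X 1 + X 0 * X 1 ^ 2 + X 2 ^ 3 + X 2 ^ 2 * X 3 + X 3 ^ 3 +
        X 1 * (X 1 ^ 2 + X 2 * X 3 + X 2 ^ 2 + X 3 ^ 2)) : MvPolynomial (Fin 4) (ZMod 2)))) = 0) :
    x = 0 := by
  have h0 := h 0; have h1 := h 1; have h2 := h 2; have h3 := h 3
  simp [pderiv_mul, pderiv_pow, pderiv_X, Pi.single_apply, eval_map] at h0 h1 h2 h3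
  have two : (2 : AlgebraicClosure (ZMod 2)) = 0 := by
    have := CharP.cast_eq_zero (AlgebraicClosure (ZMod 2)) 2
    exact_mod_cast this
  have three : (3 : AlgebraicClosure (ZMod 2)) = 1 := by
    rw [show (3 : AlgebraicClosure (ZMod 2)) = 2 + 1 by norm_num, two, zero_add]
  rw [two] at h0 h1 h2 h3
  rw [three] at h2 h3
  simp only [zero_mul, mul_zero, add_zero, zero_add, one_mul] at h0 h1 h2 h3
  have e1 : x 1 = 0 := by simpa [pow_eq_zero_iff] using h0
  rw [e1] at h1 h2 h3
  simp only [zero_mul, mul_zero, add_zero, zero_add, zero_pow, ne_eq, OfNat.ofNat_ne_zero,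
    not_false_eq_true] at h1 h2 h3
  have e2 : x 2 = 0 := by simpa [pow_eq_zero_iff] using h2
  rw [e2] at h1 h3
  simp only [zero_mul, mul_zero, add_zero, zero_add, zero_pow, ne_eq, OfNat.ofNat_ne_zero,
    not_false_eq_true] at h1 h3
  have e3 : x 3 = 0 := by simpa [pow_eq_zero_iff] using h3
  rw [e3] at h1
  simp only [zero_mul, mul_zero, add_zero, zero_add, zero_pow, ne_eq, OfNat.ofNat_ne_zero,
    not_false_eq_true] at h1
  have e0 : x 0 = 0 := by simpa [pow_eq_zero_iff] using h1
  funext i; fin_cases i <;> simpa using by assumption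

private lemma points_aux (v : Fin 4 → ZMod 2) (hv : v ≠ 0) :
    (eval v ((X 0 ^ 2 * X 1 + X 0 * X 1 ^ 2 + X 2 ^ 3 + X 2 ^ 2 * X 3 + X 3 ^ 3 +
        X 1 * (X 1 ^ 2 + X 2 * X 3 + X 2 ^ 2 + X 3 ^ 2)) : MvPolynomial (Fin 4) (ZMod 2)) = 0
      ↔ v = ![1, 0, 0, 0]) := by
  have key : ∀ a b c d : ZMod 2, ¬(a = 0 ∧ b = 0 ∧ c = 0 ∧ d = 0) →
      (a^2*b + a*b^2 + c^3 + c^2*d + d^3 + b*(b^2 + c*d + c^2 + d^2) = 0 ↔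
        (a = 1 ∧ b = 0 ∧ c = 0 ∧ d = 0)) := by decide
  have hrep : v = ![v 0, v 1, v 2, v 3] := by funext i; fin_cases i <;> rfl
  have hnz : ¬(v 0 = 0 ∧ v 1 = 0 ∧ v 2 = 0 ∧ v 3 = 0) := by
    rintro ⟨a, b, c, d⟩
    exact hv (by funext i; fin_cases i <;> assumption)
  rw [show (v = ![1,0,0,0]) ↔ (v 0 = 1 ∧ v 1 = 0 ∧ v 2 = 0 ∧ v 3 = 0) by
    constructor
    · intro h; rw [h]; refine ⟨rfl, rfl, rfl, rfl⟩
    · rintro ⟨a, b, c, d⟩; rw [hrep, a, b, c, d]]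
  rw [← key (v 0) (v 1) (v 2) (v 3) hnz]
  simp only [eval_add, eval_mul, eval_pow, eval_X]

/-- Over `𝔽₂`, the cubic form
`F̃ = T₀²T₁ + T₀T₁² + T₂³ + T₂²T₃ + T₃³ + T₁(T₁² + T₂T₃ + T₂² + T₃²)` defines a smooth
surface, and its only nonzero zero in `𝔽₂⁴` is `(1,0,0,0)`: the surface has exactly
one `𝔽₂`-rational point. -/
theorem stmt8 :
    let F : MvPolynomial (Fin 4) (ZMod 2) :=
      MvPolynomial.X 0 ^ 2 * MvPolynomial.X 1 + MvPolynomial.X 0 * MvPolynomial.X 1 ^ 2 +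
        MvPolynomial.X 2 ^ 3 + MvPolynomial.X 2 ^ 2 * MvPolynomial.X 3 +
        MvPolynomial.X 3 ^ 3 +
        MvPolynomial.X 1 * (MvPolynomial.X 1 ^ 2 + MvPolynomial.X 2 * MvPolynomial.X 3 +
          MvPolynomial.X 2 ^ 2 + MvPolynomial.X 3 ^ 2)
    IsSmoothCubicSurface F ∧
      ∀ v : Fin 4 → ZMod 2, v ≠ 0 → (MvPolynomial.eval v F = 0 ↔ v = ![1, 0, 0, 0]) := by
  intro F
  constructor
  · intro x hx ⟨_, hd⟩
    exact hx (smooth_aux x hd)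
  · exact points_aux
end

section
/- Let p be a prime and let F(x,y,z) = z + F₂(x,y,z) + F₃(x,y,z) be a polynomial over ℚ_p, where F₂ and F₃ are homogeneous of degrees 2 and 3 respectively. Let D ∈ ℚ_p be a non-square and let K = ℚ_p(√D) be the quadratic extension obtained by adjoining a square root of D. Suppose (Aᵢ) and (Bᵢ) are sequences in ℚ_p³ with Bᵢ ≠ 0 for all i, Aᵢ → (0,0,0) and Bᵢ → (0,0,0) in the p-adic topology, such that F(Aᵢ + √D·Bᵢ) = 0 in K for every i. Then: (a) for every i one has ∇F(Aᵢ)·Bᵢ + D·F₃(Bᵢ) = 0, where ∇F denotes the vector of the three partial derivatives of F; and (b) if vᵢ = p^{mᵢ}·Bᵢ with mᵢ ∈ ℤ chosen so that the sup norm of vᵢ equals 1, and the sequence vᵢ converges to a vector v ∈ ℚ_p³, then the third coordinate of v is 0; that is, every limit of the normalized secant directions lies in the tangent plane z = 0 of the surface F = 0 at the origin. -/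
set_option linter.unusedSectionVars false
set_option maxHeartbeats 2000000

open MvPolynomial Filter

section AuxLemmas

variable {R : Type*} [CommRing R]

lemma coeff_prod_top {ι : Type*} (s : Finset ι) (f : ι → Polynomial R) (d : ι → ℕ)
    (h : ∀ i ∈ s, (f i).natDegree ≤ d i) :
    (∏ i ∈ s, f i).coeff (∑ i ∈ s, d i) = ∏ i ∈ s, (f i).coeff (d i) := by
  classical
  induction s using Finset.induction_on with
  | empty => simp
  | insert _ _ hnot ih =>
      rename_i a s
      rw [Finset.prod_insert hnot, Finset.sum_insert hnot, Finset.prod_insert hnot,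
        Polynomial.coeff_mul_add_eq_of_natDegree_le (h a (Finset.mem_insert_self a s))
          ((Polynomial.natDegree_prod_le s f).trans
            (Finset.sum_le_sum fun i hi => h i (Finset.mem_insert_of_mem hi))),
        ih fun i hi => h i (Finset.mem_insert_of_mem hi)]

lemma natDegree_lin_le (a b : R) :
    (Polynomial.C a + Polynomial.C b * Polynomial.X).natDegree ≤ 1 :=
  (Polynomial.natDegree_add_le _ _).trans (by
    simp only [Polynomial.natDegree_C, Nat.zero_le, max_le_iff, true_and]
    exact (Polynomial.natDegree_mul_le).trans (by simp [Polynomial.natDegree_X_le]))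

lemma natDegree_lin_pow_le (q : Polynomial R) (hq : q.natDegree ≤ 1) (k : ℕ) :
    (q ^ k).natDegree ≤ k :=
  Polynomial.natDegree_pow_le.trans
    (by calc k * q.natDegree ≤ k * 1 := Nat.mul_le_mul_left k hq
            _ = k := mul_one k)

lemma coeff_lin_pow (a b : R) (k : ℕ) :
    ((Polynomial.C a + Polynomial.C b * Polynomial.X) ^ k).coeff k = b ^ k := by
  induction k with
  | zero => simp
  | succ k ih =>
      rw [pow_succ, Polynomial.coeff_mul_add_eq_of_natDegree_le
        (natDegree_lin_pow_le _ (natDegree_lin_le a b) k) (natDegree_lin_le a b), ih]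
      simp [pow_succ]

variable {σ : Type*} [Fintype σ] [DecidableEq σ]

noncomputable def Laux (A B : σ → R) : σ → Polynomial R :=
  fun j => Polynomial.C (A j) + Polynomial.C (B j) * Polynomial.X

lemma eval_aeval_Laux (A B : σ → R) (x : R) (G : MvPolynomial σ R) :
    Polynomial.eval x (MvPolynomial.aeval (Laux A B) G)
      = MvPolynomial.eval (fun j => A j + B j * x) G := by
  induction G using MvPolynomial.induction_on with
  | C a => simp [Laux]
  | add q r hq hr => simp [map_add, hq, hr]
  | mul_X q j hq => simp [map_mul, hq, Laux]

lemma coeff_zero_aeval_Laux (A B : σ → R) (G : MvPolynomial σ R) :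
    (MvPolynomial.aeval (Laux A B) G).coeff 0 = MvPolynomial.eval A G := by
  rw [Polynomial.coeff_zero_eq_eval_zero, eval_aeval_Laux]
  have : (fun j => A j + B j * 0) = A := by funext j; ring
  rw [this]

lemma coeff_one_aeval_Laux (A B : σ → R) (G : MvPolynomial σ R) :
    (MvPolynomial.aeval (Laux A B) G).coeff 1
      = ∑ j, MvPolynomial.eval A (MvPolynomial.pderiv j G) * B j := by
  induction G using MvPolynomial.induction_on with
  | C a => simp [Laux]
  | add q r hq hr => simp only [map_add, Polynomial.coeff_add, hq, hr,
      ← Finset.sum_add_distrib, ← add_mul]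
  | mul_X q j hq =>
      rw [map_mul, MvPolynomial.aeval_X]
      show ((MvPolynomial.aeval (Laux A B) q)
          * (Polynomial.C (A j) + Polynomial.C (B j) * Polynomial.X)).coeff 1 = _
      rw [mul_add, Polynomial.coeff_add, ← mul_assoc, Polynomial.coeff_mul_X,
        Polynomial.coeff_mul_C, Polynomial.coeff_mul_C, coeff_zero_aeval_Laux, hq]
      have : ∀ j' : σ, MvPolynomial.eval A (MvPolynomial.pderiv j' (q * MvPolynomial.X j)) * B j'
          = (MvPolynomial.eval A (MvPolynomial.pderiv j' q) * B j') * A j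
            + (if j' = j then MvPolynomial.eval A q * B j' else 0) := by
        intro j'
        rw [MvPolynomial.pderiv_mul, map_add, map_mul, map_mul, MvPolynomial.eval_X,
          MvPolynomial.pderiv_X]
        by_cases h : j' = j <;> simp [h, Pi.single_apply] <;> ring
      rw [Finset.sum_congr rfl fun j' _ => this j', Finset.sum_add_distrib,
        ← Finset.sum_mul, Finset.sum_ite_eq' Finset.univ j
          (fun j' => MvPolynomial.eval A q * B j')]
      simp [mul_comm]

lemma aeval_Laux_monomial (A B : σ → R) (e : σ →₀ ℕ) (c : R) :
    MvPolynomial.aeval (Laux A B) (MvPolynomial.monomial e c)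
      = Polynomial.C c * ∏ j, (Laux A B j) ^ (e j) := by
  rw [MvPolynomial.aeval_monomial, Finsupp.prod_fintype _ _ (fun j => pow_zero _)]
  simp [Polynomial.algebraMap_eq]

lemma natDegree_aeval_Laux_monomial_le (A B : σ → R) (e : σ →₀ ℕ) (c : R) :
    (MvPolynomial.aeval (Laux A B) (MvPolynomial.monomial e c)).natDegree ≤ ∑ j, e j := by
  rw [aeval_Laux_monomial]
  refine Polynomial.natDegree_mul_le.trans ?_
  simp only [Polynomial.natDegree_C, zero_add]
  refine (Polynomial.natDegree_prod_le _ _).trans (Finset.sum_le_sum fun j _ => ?_)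
  exact natDegree_lin_pow_le _ (natDegree_lin_le (A j) (B j)) (e j)

lemma coeff_aeval_Laux_monomial (A B : σ → R) (e : σ →₀ ℕ) (c : R) :
    (MvPolynomial.aeval (Laux A B) (MvPolynomial.monomial e c)).coeff (∑ j, e j)
      = c * ∏ j, (B j) ^ (e j) := by
  rw [aeval_Laux_monomial, Polynomial.coeff_C_mul]
  unfold Laux
  rw [coeff_prod_top Finset.univ _ (fun j => e j)
      (fun j _ => natDegree_lin_pow_le _ (natDegree_lin_le (A j) (B j)) (e j))]
  congr 1
  exact Finset.prod_congr rfl fun j _ => coeff_lin_pow (A j) (B j) (e j)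

lemma natDegree_aeval_Laux_le (A B : σ → R) (G : MvPolynomial σ R) :
    (MvPolynomial.aeval (Laux A B) G).natDegree ≤ G.totalDegree := by
  conv_lhs => rw [MvPolynomial.as_sum G, map_sum]
  refine (Polynomial.natDegree_sum_le _ _).trans ?_
  rw [Finset.fold_max_le]
  refine ⟨Nat.zero_le _, fun e he => ?_⟩
  refine (natDegree_aeval_Laux_monomial_le A B e _).trans ?_
  have h2 : (e.sum fun _ n => n) = ∑ j, e j := Finsupp.sum_fintype e (fun _ n => n) (fun _ => rfl)
  rw [← h2]
  exact MvPolynomial.le_totalDegree he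

lemma sum_e_of_homog {G : MvPolynomial σ R} {n : ℕ} (hG : G.IsHomogeneous n)
    {e : σ →₀ ℕ} (he : e ∈ G.support) : ∑ j, e j = n := by
  have := hG (MvPolynomial.mem_support_iff.mp he)
  rw [← this, Finsupp.weight_apply, Finsupp.sum_fintype]
  · simp
  · intro j; simp

lemma coeff_aeval_Laux_homog (A B : σ → R) {G : MvPolynomial σ R} {n : ℕ}
    (hG : G.IsHomogeneous n) :
    (MvPolynomial.aeval (Laux A B) G).coeff n = MvPolynomial.eval B G := by
  rw [MvPolynomial.as_sum G, map_sum, map_sum, Polynomial.finset_sum_coeff]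
  refine Finset.sum_congr rfl fun e he => ?_
  rw [← sum_e_of_homog hG he, coeff_aeval_Laux_monomial, MvPolynomial.eval_monomial,
    Finsupp.prod_fintype]
  intro j; simp

lemma homog_eval_smul {G : MvPolynomial σ R} {n : ℕ} (hG : G.IsHomogeneous n)
    (c : R) (x : σ → R) :
    MvPolynomial.eval (c • x) G = c ^ n * MvPolynomial.eval x G := by
  rw [MvPolynomial.as_sum G, map_sum, map_sum, Finset.mul_sum]
  refine Finset.sum_congr rfl fun e he => ?_
  rw [MvPolynomial.eval_monomial, MvPolynomial.eval_monomial,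
    Finsupp.prod_fintype _ _ (fun j => by simp), Finsupp.prod_fintype _ _ (fun j => by simp)]
  simp only [Pi.smul_apply, smul_eq_mul, mul_pow]
  rw [Finset.prod_mul_distrib, Finset.prod_pow_eq_pow_sum, sum_e_of_homog hG he]
  ring

lemma eval₂_aeval_Laux {S : Type*} [CommRing S] (f : R →+* S) (x : S) (A B : σ → R)
    (G : MvPolynomial σ R) :
    Polynomial.eval₂ f x (MvPolynomial.aeval (Laux A B) G)
      = MvPolynomial.eval₂ f (fun j => f (A j) + f (B j) * x) G := by
  induction G using MvPolynomial.induction_on with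
  | C a => simp [Laux]
  | add q r hq hr => simp [map_add, Polynomial.eval₂_add, MvPolynomial.eval₂_add, hq, hr]
  | mul_X q j hq => simp [map_mul, Polynomial.eval₂_mul, MvPolynomial.eval₂_mul, hq, Laux,
      Polynomial.eval₂_add, Polynomial.eval₂_C, Polynomial.eval₂_X]

lemma coeff_aeval_Laux_zero_homog (B : σ → R) {G : MvPolynomial σ R} {n : ℕ}
    (hG : G.IsHomogeneous n) {k : ℕ} (hk : k ≠ n) :
    (MvPolynomial.aeval (Laux (0 : σ → R) B) G).coeff k = 0 := by
  conv_lhs => rw [MvPolynomial.as_sum G, map_sum]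
  rw [Polynomial.finset_sum_coeff]
  refine Finset.sum_eq_zero fun e he => ?_
  have hL : ∀ j : σ, Laux (0 : σ → R) B j = Polynomial.C (B j) * Polynomial.X := by
    intro j; simp [Laux]
  rw [MvPolynomial.aeval_monomial, Finsupp.prod_fintype _ _ (fun j => pow_zero _)]
  simp only [hL, mul_pow, ← Polynomial.C_pow]
  have hCprod : (∏ x : σ, Polynomial.C (B x ^ e x)) = Polynomial.C (∏ x : σ, B x ^ e x) :=
    (map_prod (Polynomial.C : R →+* Polynomial R) _ _).symm
  rw [Finset.prod_mul_distrib, Finset.prod_pow_eq_pow_sum, sum_e_of_homog hG he, hCprod,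
    Polynomial.algebraMap_eq, ← mul_assoc, ← Polynomial.C_mul, Polynomial.coeff_C_mul,
    Polynomial.coeff_X_pow, if_neg hk, mul_zero]

end AuxLemmas

/-- Let `F(x,y,z) = z + F₂ + F₃` over `ℚ_p` (`F₂`, `F₃` homogeneous of degrees 2, 3),
let `D` be a non-square and `K = ℚ_p(√D)`.  If `Aᵢ, Bᵢ → 0` in `ℚ_p³` with `Bᵢ ≠ 0` and
`F(Aᵢ + √D·Bᵢ) = 0` in `K` for all `i`, then:
(a) `∇F(Aᵢ)·Bᵢ + D·F₃(Bᵢ) = 0` for every `i`; and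
(b) whenever `vᵢ = p^{mᵢ}·Bᵢ` have sup norm `1` and converge to some `w`, the third
coordinate of `w` is `0`, i.e. every limit of normalized secant directions lies in the
tangent plane `z = 0` at the origin. -/
theorem stmt9 (p : ℕ) [Fact p.Prime]
    (F₂ F₃ : MvPolynomial (Fin 3) ℚ_[p])
    (hF₂ : F₂.IsHomogeneous 2) (hF₃ : F₃.IsHomogeneous 3)
    (F : MvPolynomial (Fin 3) ℚ_[p]) (hF : F = MvPolynomial.X 2 + F₂ + F₃)
    (D : ℚ_[p]) (hD : ¬ ∃ r : ℚ_[p], r ^ 2 = D)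
    (K : Type) [Field K] [Algebra ℚ_[p] K] (sqrtD : K)
    (hsqrtD : sqrtD ^ 2 = algebraMap ℚ_[p] K D)
    (A B : ℕ → (Fin 3 → ℚ_[p])) (hB0 : ∀ i, B i ≠ 0)
    (hA : Tendsto A atTop (nhds 0)) (hBlim : Tendsto B atTop (nhds 0))
    (hzero : ∀ i, MvPolynomial.eval
        (fun j => algebraMap ℚ_[p] K (A i j) + sqrtD * algebraMap ℚ_[p] K (B i j))
        (MvPolynomial.map (algebraMap ℚ_[p] K) F) = 0) :
    (∀ i, (∑ j : Fin 3, MvPolynomial.eval (A i) (MvPolynomial.pderiv j F) * B i j) +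
        D * MvPolynomial.eval (B i) F₃ = 0) ∧
    (∀ (m : ℕ → ℤ) (w : Fin 3 → ℚ_[p]),
      (∀ i, ‖((p : ℚ_[p]) ^ (m i)) • B i‖ = 1) →
      Tendsto (fun i => ((p : ℚ_[p]) ^ (m i)) • B i) atTop (nhds w) →
      w 2 = 0) := by
  have hpp : p.Prime := Fact.out
  set f : ℚ_[p] →+* K := algebraMap ℚ_[p] K with hfdef
  have hinj : Function.Injective f := f.injective
  -- independence of 1 and sqrtD over ℚ_p
  have hindep : ∀ a b : ℚ_[p], f a + f b * sqrtD = 0 → b = 0 := by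
    intro a b h
    by_contra hb
    apply hD
    have hfb : f b ≠ 0 := fun h0 => hb (hinj (by simpa using h0))
    have h1 : sqrtD = f (-a / b) := by
      rw [map_div₀, map_neg, eq_div_iff hfb]
      linear_combination h
    exact ⟨-a / b, hinj (by rw [map_pow, ← h1, hsqrtD])⟩
  have htot : F.totalDegree ≤ 3 := by
    rw [hF]
    refine (MvPolynomial.totalDegree_add _ _).trans (max_le ?_ hF₃.totalDegree_le)
    refine ((MvPolynomial.totalDegree_add _ _).trans
      (max_le ?_ (hF₂.totalDegree_le))).trans (by norm_num)
    simp [MvPolynomial.totalDegree_X]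
  -- part (a)
  have key : ∀ i, (∑ j : Fin 3, MvPolynomial.eval (A i) (MvPolynomial.pderiv j F) * B i j) +
      D * MvPolynomial.eval (B i) F₃ = 0 := by
    intro i
    set q : Polynomial ℚ_[p] := MvPolynomial.aeval (Laux (A i) (B i)) F with hq
    have hdeg : q.natDegree < 4 :=
      Nat.lt_succ_of_le ((natDegree_aeval_Laux_le _ _ _).trans htot)
    have heval : Polynomial.eval₂ f sqrtD q = 0 := by
      rw [hq, eval₂_aeval_Laux]
      have hz := hzero i
      rw [MvPolynomial.eval_map] at hz
      have hfun : (fun j => f (A i j) + f (B i j) * sqrtD)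
          = (fun j => f (A i j) + sqrtD * f (B i j)) := by funext j; ring
      rw [hfun]
      exact hz
    have hexp : f (q.coeff 0 + D * q.coeff 2) + f (q.coeff 1 + D * q.coeff 3) * sqrtD = 0 := by
      rw [← heval, Polynomial.eval₂_eq_sum_range' f hdeg sqrtD]
      have h3 : sqrtD ^ 3 = f D * sqrtD := by rw [pow_succ, hsqrtD]
      rw [Finset.sum_range_succ, Finset.sum_range_succ, Finset.sum_range_succ,
        Finset.sum_range_one]
      simp only [pow_zero, pow_one, hsqrtD, h3, map_add, map_mul]
      ring
    have hc13 : q.coeff 1 + D * q.coeff 3 = 0 := hindep _ _ hexp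
    have hc1 : q.coeff 1
        = ∑ j : Fin 3, MvPolynomial.eval (A i) (MvPolynomial.pderiv j F) * B i j :=
      coeff_one_aeval_Laux _ _ _
    have hc3 : q.coeff 3 = MvPolynomial.eval (B i) F₃ := by
      rw [hq, hF, map_add, map_add, Polynomial.coeff_add, Polynomial.coeff_add]
      have h1 : (MvPolynomial.aeval (Laux (A i) (B i))
          (MvPolynomial.X 2 : MvPolynomial (Fin 3) ℚ_[p])).coeff 3 = 0 := by
        rw [MvPolynomial.aeval_X]
        exact Polynomial.coeff_eq_zero_of_natDegree_lt
          (lt_of_le_of_lt (natDegree_lin_le (A i 2) (B i 2)) (by norm_num))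
      have h2 : (MvPolynomial.aeval (Laux (A i) (B i)) F₂).coeff 3 = 0 :=
        Polynomial.coeff_eq_zero_of_natDegree_lt
          (lt_of_le_of_lt ((natDegree_aeval_Laux_le _ _ _).trans hF₂.totalDegree_le)
            (by norm_num))
      rw [h1, h2, coeff_aeval_Laux_homog _ _ hF₃, zero_add, zero_add]
    rw [← hc1, ← hc3]
    exact hc13
  refine ⟨key, ?_⟩
  -- part (b)
  intro m w hnorm hvlim
  set v : ℕ → Fin 3 → ℚ_[p] := fun i => ((p : ℚ_[p]) ^ (m i)) • B i with hvdef
  have hpR : (0 : ℝ) < (p : ℝ) := by exact_mod_cast hpp.pos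
  have hpRne : (p : ℝ) ≠ 0 := ne_of_gt hpR
  have hpne : (p : ℚ_[p]) ≠ 0 := by
    exact_mod_cast Nat.cast_ne_zero.mpr hpp.ne_zero
  have hcne : ∀ i, ((p : ℚ_[p]) ^ (m i)) ≠ 0 := fun i => zpow_ne_zero _ hpne
  have hnormB : ∀ i, ‖B i‖ = (p : ℝ) ^ (m i) := by
    intro i
    have h1 := hnorm i
    rw [norm_smul, Padic.norm_p_zpow] at h1
    calc ‖B i‖ = (p : ℝ) ^ (m i) * ((p : ℝ) ^ (-(m i)) * ‖B i‖) := by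
          rw [← mul_assoc, ← zpow_add₀ hpRne, add_neg_cancel, zpow_zero, one_mul]
      _ = (p : ℝ) ^ (m i) := by rw [h1, mul_one]
  have hpm0 : Tendsto (fun i => (p : ℝ) ^ (m i)) atTop (nhds 0) := by
    have hB0' : Tendsto (fun i => ‖B i‖) atTop (nhds 0) := by
      simpa using hBlim.norm
    have : (fun i => ‖B i‖) = fun i => (p : ℝ) ^ (m i) := funext hnormB
    rwa [this] at hB0'
  -- scaled identity
  have key2 : ∀ i, (∑ j : Fin 3, MvPolynomial.eval (A i) (MvPolynomial.pderiv j F) * v i j) +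
      D * (((p : ℚ_[p]) ^ (m i))⁻¹) ^ 2 * MvPolynomial.eval (v i) F₃ = 0 := by
    intro i
    have h := key i
    have hv3 : MvPolynomial.eval (v i) F₃
        = ((p : ℚ_[p]) ^ (m i)) ^ 3 * MvPolynomial.eval (B i) F₃ := homog_eval_smul hF₃ _ _
    have hsum : (∑ j : Fin 3, MvPolynomial.eval (A i) (MvPolynomial.pderiv j F) * v i j)
        = ((p : ℚ_[p]) ^ (m i)) * ∑ j : Fin 3,
            MvPolynomial.eval (A i) (MvPolynomial.pderiv j F) * B i j := by
      rw [Finset.mul_sum]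
      refine Finset.sum_congr rfl fun j _ => ?_
      simp only [hvdef, Pi.smul_apply, smul_eq_mul]
      ring
    rw [hsum, hv3]
    have hc := hcne i
    have e1 : D * (((p : ℚ_[p]) ^ (m i))⁻¹) ^ 2 * (((p : ℚ_[p]) ^ (m i)) ^ 3
        * MvPolynomial.eval (B i) F₃)
        = ((p : ℚ_[p]) ^ (m i)) * (D * MvPolynomial.eval (B i) F₃) := by
      field_simp
    rw [e1, ← mul_add, h, mul_zero]
  -- limits
  have hS : Tendsto (fun i => ∑ j : Fin 3,
      MvPolynomial.eval (A i) (MvPolynomial.pderiv j F) * v i j) atTop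
      (nhds (∑ j : Fin 3, MvPolynomial.eval (0 : Fin 3 → ℚ_[p])
        (MvPolynomial.pderiv j F) * w j)) := by
    refine tendsto_finset_sum _ fun j _ => Tendsto.mul ?_ ?_
    · exact ((MvPolynomial.continuous_eval _).tendsto _).comp hA
    · exact ((continuous_apply j).tendsto _).comp hvlim
  -- compute the limit value of the first sum
  have hgradsum : (∑ j : Fin 3, MvPolynomial.eval (0 : Fin 3 → ℚ_[p])
      (MvPolynomial.pderiv j F) * w j) = w 2 := by
    have hgrad : ∀ j : Fin 3, MvPolynomial.eval (0 : Fin 3 → ℚ_[p]) (MvPolynomial.pderiv j F)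
        = if j = 2 then 1 else 0 := by
      intro j
      have hpd : ∀ G : MvPolynomial (Fin 3) ℚ_[p],
          MvPolynomial.eval (0 : Fin 3 → ℚ_[p]) (MvPolynomial.pderiv j G)
            = (MvPolynomial.aeval (Laux (0 : Fin 3 → ℚ_[p]) (Pi.single j 1)) G).coeff 1 := by
        intro G
        rw [coeff_one_aeval_Laux]
        rw [Finset.sum_eq_single j]
        · simp
        · intro j' _ hj'
          simp [Pi.single_apply, hj']
        · intro hj; exact absurd (Finset.mem_univ j) hj
      rw [hF, map_add, map_add, map_add, map_add]
      rw [hpd F₂, hpd F₃, coeff_aeval_Laux_zero_homog _ hF₂ (by norm_num),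
        coeff_aeval_Laux_zero_homog _ hF₃ (by norm_num), add_zero, add_zero]
      rw [MvPolynomial.pderiv_X]
      by_cases h : j = 2 <;> simp [h, Pi.single_apply]
    rw [Finset.sum_congr rfl fun j _ => by rw [hgrad j]]
    simp [Finset.sum_ite_eq', ite_mul]
  -- second term tends to zero
  have hc2 : Tendsto (fun i => (((p : ℚ_[p]) ^ (m i))⁻¹) ^ 2) atTop (nhds 0) := by
    rw [tendsto_zero_iff_norm_tendsto_zero]
    have hn : ∀ i, ‖(((p : ℚ_[p]) ^ (m i))⁻¹) ^ 2‖ = ((p : ℝ) ^ (m i)) ^ 2 := by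
      intro i
      rw [norm_pow, norm_inv, Padic.norm_p_zpow, ← zpow_neg, neg_neg]
    rw [funext hn]
    simpa using hpm0.pow 2
  have hterm2 : Tendsto (fun i => D * (((p : ℚ_[p]) ^ (m i))⁻¹) ^ 2
      * MvPolynomial.eval (v i) F₃) atTop (nhds 0) := by
    have hev : Tendsto (fun i => MvPolynomial.eval (v i) F₃) atTop
        (nhds (MvPolynomial.eval w F₃)) :=
      ((MvPolynomial.continuous_eval _).tendsto _).comp hvlim
    have := (tendsto_const_nhds (x := D) (f := atTop)).mul hc2 |>.mul hev
    simpa using this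
  have hfinal : Tendsto (fun i =>
      (∑ j : Fin 3, MvPolynomial.eval (A i) (MvPolynomial.pderiv j F) * v i j) +
        D * (((p : ℚ_[p]) ^ (m i))⁻¹) ^ 2 * MvPolynomial.eval (v i) F₃) atTop
      (nhds (w 2 + 0)) := by
    refine Tendsto.add ?_ hterm2
    rwa [hgradsum] at hS
  have hzero' : Tendsto (fun i =>
      (∑ j : Fin 3, MvPolynomial.eval (A i) (MvPolynomial.pderiv j F) * v i j) +
        D * (((p : ℚ_[p]) ^ (m i))⁻¹) ^ 2 * MvPolynomial.eval (v i) F₃) atTop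
      (nhds 0) := by
    have : (fun i =>
        (∑ j : Fin 3, MvPolynomial.eval (A i) (MvPolynomial.pderiv j F) * v i j) +
          D * (((p : ℚ_[p]) ^ (m i))⁻¹) ^ 2 * MvPolynomial.eval (v i) F₃)
        = fun _ => (0 : ℚ_[p]) := funext key2
    rw [this]
    exact tendsto_const_nhds
  have := tendsto_nhds_unique hfinal hzero'
  simpa using this
end
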